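/- Let m ≥ 1, and let w, p : Fin m → ℕ with w i ≥ 1 and p i ≥ 1 for all i; let W = maxᵢ w i, let c and g be natural numbers, and let u be a real with 0 < u ≤ 1/2. Let y : Fin m → Bool → ℝ³ be a placement of ions, where ion (i, false) carries charge +(w i) and ion (i, true) carries charge −(w i), such that dist(y i false, y i true) = (w i)²/(p i) for every i, and dist(y i b, y j b′) ≥ α for all i ≠ j and all b, b′, where α > 0 satisfies 4·m²·W²/α < u. For T ⊆ Fin m, let E(T) denote the sum of Coulomb energies q_a·q_b/dist(a,b) over all unordered pairs of distinct ions a, b belonging to indices in T. Then the following are equivalent: (i) there exists T ⊆ Fin m with ∑_{i∈T} w i ≤ c and E(T) ≤ −g + u; (ii) there exists T ⊆ Fin m with ∑_{i∈T} w i ≤ c and ∑_{i∈T} p i ≥ g. -/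

import Mathlib

/-- The charge of ion `(i, b)`: `+(w i)` for `b = false` (positive ion) and `−(w i)` for
`b = true` (negative ion). -/
noncomputable def ionCharge {m : ℕ} (w : Fin m → ℕ) (q : Fin m × Bool) : ℝ :=
  if q.2 then -(w q.1 : ℝ) else (w q.1 : ℝ)

/-- The total Coulomb energy of the ions with indices in `T`: the sum of
`q_a·q_b/dist(a,b)` over all unordered pairs of distinct ions `a`, `b` with indices in
`T` (realised as half the sum over ordered pairs of distinct ions). -/
noncomputable def coulombEnergy {m : ℕ} (w : Fin m → ℕ)
    (y : Fin m → Bool → EuclideanSpace ℝ (Fin 3)) (T : Finset (Fin m)) : ℝ :=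
  (∑ p ∈ (T ×ˢ (Finset.univ : Finset Bool)).offDiag,
      ionCharge w p.1 * ionCharge w p.2 / dist (y p.1.1 p.1.2) (y p.2.1 p.2.2)) / 2

/-- Correctness of the reduction from knapsack to at-least-`k`-charge removal under the
Coulomb potential: each item `i` is represented by a positive ion of charge `w i` and a
negative ion of charge `−(w i)` at mutual distance `(w i)²/(p i)` (hence mutual Coulomb
energy `−p i`), ions of distinct items being at distance at least `α`.  Then there is a
set `T` of items of total weight at most `c` whose ions have total Coulomb energy at most
`−g + u` iff there is a set `T` of items of total weight at most `c` and total value at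
least `g`. -/
theorem knapsack_coulomb_reduction (m : ℕ) (hm : 1 ≤ m) (w p : Fin m → ℕ)
    (hw : ∀ i, 1 ≤ w i) (hp : ∀ i, 1 ≤ p i)
    (W : ℕ) (hW : W = Finset.univ.sup w) (c g : ℕ) (u : ℝ) (hu : 0 < u)
    (hu' : u ≤ 1 / 2) (α : ℝ) (hα : 0 < α)
    (hαu : 4 * (m : ℝ) ^ 2 * (W : ℝ) ^ 2 / α < u)
    (y : Fin m → Bool → EuclideanSpace ℝ (Fin 3))
    (hdist : ∀ i, dist (y i false) (y i true) = (w i : ℝ) ^ 2 / (p i : ℝ))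
    (hfar : ∀ i j : Fin m, i ≠ j → ∀ b b' : Bool, α ≤ dist (y i b) (y j b')) :
    (∃ T : Finset (Fin m), ∑ i ∈ T, w i ≤ c ∧
        coulombEnergy w y T ≤ -(g : ℝ) + u) ↔
      ∃ T : Finset (Fin m), ∑ i ∈ T, w i ≤ c ∧ g ≤ ∑ i ∈ T, p i := by
  have hwW : ∀ i, w i ≤ W := fun i => hW ▸ Finset.le_sup (Finset.mem_univ i)
  -- key: the Coulomb energy is close to minus the total value
  have key : ∀ T : Finset (Fin m),
      |coulombEnergy w y T + ∑ i ∈ T, (p i : ℝ)| < u := by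
    intro T
    set f : (Fin m × Bool) × (Fin m × Bool) → ℝ := fun q =>
      ionCharge w q.1 * ionCharge w q.2 / dist (y q.1.1 q.1.2) (y q.2.1 q.2.2) with hf
    set S := (T ×ˢ (Finset.univ : Finset Bool)).offDiag with hS
    have hsplit : ∑ q ∈ S.filter (fun q => q.1.1 = q.2.1), f q
        + ∑ q ∈ S.filter (fun q => ¬ q.1.1 = q.2.1), f q = ∑ q ∈ S, f q :=
      Finset.sum_filter_add_sum_filter_not S _ f
    -- the same-item part
    have hval : ∀ i : Fin m, ∀ b : Bool, f ((i, b), (i, !b)) = -(p i : ℝ) := by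
      intro i b
      have hwpos : (0:ℝ) < (w i : ℝ) := by exact_mod_cast hw i
      have hppos : (0:ℝ) < (p i : ℝ) := by exact_mod_cast hp i
      have hd : dist (y i b) (y i (!b)) = (w i : ℝ) ^ 2 / (p i : ℝ) := by
        cases b
        · simpa using hdist i
        · simpa [dist_comm] using hdist i
      cases b <;>
        · simp only [hf, ionCharge, hd]
          simp only [Bool.not_false, Bool.not_true, Bool.false_eq_true, eq_self_iff_true, if_true, if_false]
          field_simp
    have hform : ∀ q ∈ S.filter (fun q => q.1.1 = q.2.1), q = (q.1, (q.1.1, !q.1.2)) := by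
      intro q hq
      rw [Finset.mem_filter, hS, Finset.mem_offDiag] at hq
      obtain ⟨⟨h1, h2, hne⟩, heq⟩ := hq
      have hne2 : q.2.2 ≠ q.1.2 := fun h => hne (Prod.ext_iff.mpr ⟨heq, h.symm⟩)
      have hb : q.2.2 = !q.1.2 := by
        revert hne2
        rcases q.1.2 <;> rcases q.2.2 <;> simp
      exact (Prod.ext_iff.mpr ⟨rfl, Prod.ext_iff.mpr ⟨heq.symm, hb⟩⟩ : q = (q.1, (q.1.1, !q.1.2)))
    have hsame : ∑ q ∈ S.filter (fun q => q.1.1 = q.2.1), f q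
        = ∑ a ∈ T ×ˢ (Finset.univ : Finset Bool), f (a, (a.1, !a.2)) := by
      refine Finset.sum_nbij' (fun q => q.1) (fun a => (a, (a.1, !a.2))) ?_ ?_ ?_ ?_ ?_
      · intro q hq
        rw [Finset.mem_filter, hS, Finset.mem_offDiag] at hq
        exact hq.1.1
      · intro a ha
        rw [Finset.mem_filter, hS, Finset.mem_offDiag]
        refine ⟨⟨ha, ?_, ?_⟩, rfl⟩
        · rw [Finset.mem_product] at ha ⊢
          exact ⟨ha.1, Finset.mem_univ _⟩
        · intro h
          have := congrArg Prod.snd h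
          simp at this
      · intro q hq
        exact (hform q hq).symm
      · intro a _; rfl
      · intro q hq
        exact congrArg f (hform q hq)
    have hsame2 : ∑ q ∈ S.filter (fun q => q.1.1 = q.2.1), f q
        = -2 * ∑ i ∈ T, (p i : ℝ) := by
      rw [hsame, Finset.sum_product]
      rw [Finset.mul_sum]
      refine Finset.sum_congr rfl fun i _ => ?_
      rw [Fintype.sum_bool, hval, hval]
      ring
    -- the cross part
    have hcross : |∑ q ∈ S.filter (fun q => ¬ q.1.1 = q.2.1), f q|
        ≤ 4 * (m:ℝ)^2 * (W:ℝ)^2 / α := by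
      have hterm : ∀ q ∈ S.filter (fun q => ¬ q.1.1 = q.2.1), |f q| ≤ (W:ℝ)^2 / α := by
        intro q hq
        rw [Finset.mem_filter] at hq
        have hd : α ≤ dist (y q.1.1 q.1.2) (y q.2.1 q.2.2) := hfar _ _ hq.2 _ _
        have hdpos : (0:ℝ) < dist (y q.1.1 q.1.2) (y q.2.1 q.2.2) := lt_of_lt_of_le hα hd
        have hc : ∀ a : Fin m × Bool, |ionCharge w a| ≤ (W:ℝ) := by
          intro a
          have habs : |ionCharge w a| = (w a.1 : ℝ) := by
            unfold ionCharge
            split <;> simp [Nat.abs_cast]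
          rw [habs]
          exact_mod_cast hwW a.1
        calc |f q| = |ionCharge w q.1 * ionCharge w q.2| / dist (y q.1.1 q.1.2) (y q.2.1 q.2.2) := by
              rw [hf]; rw [abs_div, abs_of_pos hdpos]
          _ ≤ (W:ℝ)^2 / α := by
              apply div_le_div₀ (by positivity)
              · rw [abs_mul, sq]
                exact mul_le_mul (hc q.1) (hc q.2) (abs_nonneg _) (le_trans (abs_nonneg (ionCharge w q.1)) (hc q.1))
              · exact hα
              · exact hd
      have hcard : ((S.filter (fun q => ¬ q.1.1 = q.2.1)).card : ℝ) ≤ 4 * (m:ℝ)^2 := by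
        have h1 : (S.filter (fun q => ¬ q.1.1 = q.2.1)).card ≤ S.card :=
          Finset.card_filter_le _ _
        have h2 : S.card ≤ (2*m)*(2*m) := by
          rw [hS, Finset.offDiag_card]
          have : (T ×ˢ (Finset.univ : Finset Bool)).card ≤ 2*m := by
            rw [Finset.card_product]
            simp only [Finset.card_univ, Fintype.card_bool]
            have : T.card ≤ m := le_trans (Finset.card_le_univ T) (by simp)
            omega
          calc _ ≤ (T ×ˢ (Finset.univ : Finset Bool)).card * (T ×ˢ (Finset.univ : Finset Bool)).card := Nat.sub_le _ _
            _ ≤ (2*m)*(2*m) := Nat.mul_le_mul this this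
        have : ((S.filter (fun q => ¬ q.1.1 = q.2.1)).card : ℝ) ≤ ((2*m)*(2*m) : ℕ) := by
          exact_mod_cast le_trans h1 h2
        calc ((S.filter (fun q => ¬ q.1.1 = q.2.1)).card : ℝ) ≤ ((2*m)*(2*m) : ℕ) := this
          _ = 4 * (m:ℝ)^2 := by push_cast; ring
      calc |∑ q ∈ S.filter (fun q => ¬ q.1.1 = q.2.1), f q|
          ≤ ∑ q ∈ S.filter (fun q => ¬ q.1.1 = q.2.1), |f q| := Finset.abs_sum_le_sum_abs _ _
        _ ≤ (S.filter (fun q => ¬ q.1.1 = q.2.1)).card • ((W:ℝ)^2 / α) :=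
            Finset.sum_le_card_nsmul _ _ _ hterm
        _ = ((S.filter (fun q => ¬ q.1.1 = q.2.1)).card : ℝ) * ((W:ℝ)^2 / α) := by
            rw [nsmul_eq_mul]
        _ ≤ 4 * (m:ℝ)^2 * ((W:ℝ)^2 / α) := by
            apply mul_le_mul_of_nonneg_right hcard (by positivity)
        _ = 4 * (m:ℝ)^2 * (W:ℝ)^2 / α := by ring
    have hE : coulombEnergy w y T + ∑ i ∈ T, (p i : ℝ)
        = (∑ q ∈ S.filter (fun q => ¬ q.1.1 = q.2.1), f q) / 2 := by
      unfold coulombEnergy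
      rw [← hsplit, hsame2]
      ring
    rw [hE, abs_div, abs_of_pos (by norm_num : (0:ℝ) < 2)]
    have hnn : (0:ℝ) ≤ 4 * (m:ℝ)^2 * (W:ℝ)^2 / α := by positivity
    linarith
  constructor
  · rintro ⟨T, hTc, hTE⟩
    refine ⟨T, hTc, ?_⟩
    have h1 := key T
    rw [abs_lt] at h1
    have h2 : (g:ℝ) - 1 < ∑ i ∈ T, (p i : ℝ) := by linarith
    have h3 : (g:ℝ) < (∑ i ∈ T, p i : ℕ) + 1 := by push_cast; linarith
    exact_mod_cast Nat.lt_add_one_iff.mp (by exact_mod_cast h3)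
  · rintro ⟨T, hTc, hTg⟩
    refine ⟨T, hTc, ?_⟩
    have h1 := key T
    rw [abs_lt] at h1
    have h2 : (g:ℝ) ≤ ∑ i ∈ T, (p i : ℝ) := by exact_mod_cast hTg
    linarith
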